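/- Let C ⊆ ℝ² be the interior of a strictly convex body and let P be a Borel probability distribution on ℝ² such that P(bd(x+C)) = 0 for every x ∈ ℝ². If X₁, …, X_n are independent random points each distributed according to P, then almost surely no three of the points X₁, …, X_n lie on the boundary of a common translate of C (i.e., the sample is in general position relative to C almost surely). -/

import Mathlib

open MeasureTheory

/-- The translate `x + C` of a set `C ⊆ ℝ²` by a vector `x`. -/
def translateSet (x : ℝ × ℝ) (C : Set (ℝ × ℝ)) : Set (ℝ × ℝ) :=
  (fun y => x + y) '' C

section Stmt10AuxSection
open Set

namespace Stmt10Aux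

/-- Linear functional with kernel spanned by `d`. -/
def phi (d p : ℝ × ℝ) : ℝ := p.1 * d.2 - p.2 * d.1

lemma phi_eq_imp {d p q : ℝ × ℝ} (hd : d ≠ 0) (h : phi d p = phi d q) :
    ∃ c : ℝ, q = p + c • d := by
  unfold phi at h
  rcases eq_or_ne d.1 0 with h1 | h1
  · have h2 : d.2 ≠ 0 := fun h2 => hd (Prod.ext h1 h2)
    refine ⟨(q.2 - p.2) / d.2, ?_⟩
    have hq1 : p.1 = q.1 := by
      have : p.1 * d.2 = q.1 * d.2 := by rw [h1] at h; linarith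
      exact mul_right_cancel₀ h2 this
    apply Prod.ext <;> simp [Prod.smul_def, smul_eq_mul, h1, hq1] <;> field_simp <;> ring
  · refine ⟨(q.1 - p.1) / d.1, ?_⟩
    apply Prod.ext
    · simp [Prod.smul_def, smul_eq_mul]
      field_simp
      ring
    · simp [Prod.smul_def, smul_eq_mul]
      field_simp
      nlinarith [h]

lemma mid_interior {K : Set (ℝ × ℝ)} (hstrict : StrictConvex ℝ K)
    {a b q : ℝ × ℝ} (ha : a ∈ K) (hb : b ∈ K) (hab : a ≠ b) {t : ℝ}
    (ht0 : 0 < t) (ht1 : t < 1) (heq : q = (1 - t) • a + t • b)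
    (hq : q ∈ frontier K) : False := by
  have h := hstrict ha hb hab (by linarith : (0:ℝ) < 1 - t) ht0 (by ring)
  exact hq.2 (heq ▸ h)

end Stmt10Aux

namespace Stmt10Aux

lemma phi_lin (d p r : ℝ × ℝ) (s : ℝ) :
    phi d ((1 - s) • p + s • r) = (1 - s) * phi d p + s * phi d r := by
  simp [phi, Prod.smul_def, smul_eq_mul]
  ring

lemma key {K : Set (ℝ × ℝ)} (hconv : Convex ℝ K) (hstrict : StrictConvex ℝ K)
    {d p q r : ℝ × ℝ} (hd : d ≠ 0)
    (hpK : p ∈ K) (hrK : r ∈ K) (hpd : p + d ∈ K) (hrd : r + d ∈ K)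
    (hqK : q ∈ K) (hqdK : q + d ∈ K)
    (hq : q ∈ frontier K) (hqd : q + d ∈ frontier K)
    (h1 : phi d p < phi d q) (h2 : phi d q < phi d r) : False := by
  have hrp : phi d p < phi d r := h1.trans h2
  set s := (phi d q - phi d p) / (phi d r - phi d p) with hs_def
  have hs0 : 0 < s := div_pos (by linarith) (by linarith)
  have hs1 : s < 1 := (div_lt_one (by linarith)).2 (by linarith)
  set m := (1 - s) • p + s • r with hm_def
  have hmK : m ∈ K := hconv hpK hrK (by linarith) hs0.le (by ring)
  have hmdK : m + d ∈ K := by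
    have hmd : m + d = (1 - s) • (p + d) + s • (r + d) := by rw [hm_def]; module
    rw [hmd]
    exact hconv hpd hrd (by linarith) hs0.le (by ring)
  have hphim : phi d m = phi d q := by
    rw [hm_def, phi_lin]
    have hs' : s * (phi d r - phi d p) = phi d q - phi d p := by
      rw [hs_def]; exact div_mul_cancel₀ _ (by linarith)
    linear_combination hs'
  obtain ⟨c, hc⟩ := phi_eq_imp hd hphim
  -- q = m + c • d, hence m = q + (-c) • d
  have hm_q : m = q + (-c) • d := by rw [hc]; module
  rcases lt_trichotomy c 0 with hcneg | hczero | hcpos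
  · -- -c > 0 : q + d is strictly between q and m + d = q + (-c+1) • d
    have hcp : (0:ℝ) < -c + 1 := by linarith
    have hne : (-c + 1 : ℝ) ≠ 0 := ne_of_gt hcp
    refine mid_interior hstrict hqK hmdK ?_ (t := 1/(-c+1))
      (div_pos one_pos hcp) ((div_lt_one hcp).2 (by linarith)) ?_ hqd
    · intro hqm
      have h0 : (-c + 1) • d = 0 := by
        have hx : (-c + 1) • d = (m + d) - q := by rw [hm_q]; module
        rw [← hqm] at hx; simpa using hx
      rcases smul_eq_zero.1 h0 with h | h
      · linarith
      · exact hd h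
    · rw [hm_q]
      match_scalars <;> field_simp <;> ring
  · -- c = 0 : q = m is strictly between p and r
    have hpr : p ≠ r := by
      intro h; rw [h] at h1; exact absurd (h1.trans h2) (lt_irrefl _)
    refine mid_interior hstrict hpK hrK hpr hs0 hs1 ?_ hq
    rw [← hm_def, hm_q, hczero]; simp
  · -- c > 0 : q is strictly between m = q + (-c) • d and q + d
    have hcp : (0:ℝ) < 1 + c := by linarith
    have hne : (1 + c : ℝ) ≠ 0 := ne_of_gt hcp
    refine mid_interior hstrict hmK hqdK ?_ (t := c/(1+c))
      (div_pos hcpos hcp) ((div_lt_one hcp).2 (by linarith)) ?_ hq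
    · rw [hm_q]
      intro hqm
      have h0 : (-c - 1) • d = 0 := by
        have hx : (-c - 1) • d = (q + (-c) • d) - (q + d) := by module
        rw [hqm] at hx; simpa using hx
      rcases smul_eq_zero.1 h0 with h | h
      · linarith
      · exact hd h
    · rw [hm_q]
      match_scalars <;> field_simp <;> ring

end Stmt10Aux

namespace Stmt10Aux

lemma key2 {K : Set (ℝ × ℝ)} (hcl : IsClosed K) (hstrict : StrictConvex ℝ K)
    {d p q : ℝ × ℝ} (hd : d ≠ 0)
    (hp : p ∈ frontier K) (hpd : p + d ∈ frontier K)
    (hq : q ∈ frontier K) (hqd : q + d ∈ frontier K)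
    (hne : p ≠ q) (heq : phi d p = phi d q) : False := by
  have hfs : frontier K ⊆ K := hcl.frontier_subset
  obtain ⟨e, he⟩ := phi_eq_imp hd heq
  have he0 : e ≠ 0 := by
    intro h; rw [h] at he; simp at he; exact hne he.symm
  rcases lt_or_gt_of_ne he0 with hneg | hpos
  · -- e < 0 : p is strictly between q = p + e•d and p + d
    have hcp : (0:ℝ) < 1 - e := by linarith
    have hnz : (1 - e : ℝ) ≠ 0 := ne_of_gt hcp
    refine mid_interior hstrict (hfs hq) (hfs hpd) ?_ (t := -e/(1-e))
      (div_pos (by linarith) hcp) ((div_lt_one hcp).2 (by linarith)) ?_ hp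
    · intro h
      rw [he] at h
      have h0 : (1 - e) • d = 0 := by
        have hx : (1 - e) • d = (p + d) - (p + e • d) := by module
        rw [← h] at hx; simpa using hx
      rcases smul_eq_zero.1 h0 with h' | h'
      · linarith
      · exact hd h'
    · rw [he]
      match_scalars <;> field_simp <;> ring
  · -- e > 0 : p + d is strictly between p and q + d = p + (e+1)•d
    have hcp : (0:ℝ) < e + 1 := by linarith
    have hnz : (e + 1 : ℝ) ≠ 0 := ne_of_gt hcp
    refine mid_interior hstrict (hfs hp) (hfs hqd) ?_ (t := 1/(e+1))
      (div_pos one_pos hcp) ((div_lt_one hcp).2 (by linarith)) ?_ hpd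
    · intro h
      rw [he] at h
      have h0 : (e + 1) • d = 0 := by
        have hx : (e + 1) • d = (p + e • d + d) - p := by module
        rw [← h] at hx; simpa using hx
      rcases smul_eq_zero.1 h0 with h' | h'
      · linarith
      · exact hd h'
    · rw [he]
      match_scalars <;> field_simp <;> ring

lemma atMostTwo {K : Set (ℝ × ℝ)} (hconv : Convex ℝ K) (hcl : IsClosed K)
    (hstrict : StrictConvex ℝ K) {d : ℝ × ℝ} (hd : d ≠ 0) {u v w : ℝ × ℝ}
    (hu : u ∈ frontier K) (hud : u + d ∈ frontier K)
    (hv : v ∈ frontier K) (hvd : v + d ∈ frontier K)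
    (hw : w ∈ frontier K) (hwd : w + d ∈ frontier K) :
    u = v ∨ u = w ∨ v = w := by
  by_contra hcon
  push_neg at hcon
  obtain ⟨huv, huw, hvw⟩ := hcon
  have hfs : frontier K ⊆ K := hcl.frontier_subset
  rcases eq_or_ne (phi d u) (phi d v) with h | huv'
  · exact key2 hcl hstrict hd hu hud hv hvd huv h
  rcases eq_or_ne (phi d u) (phi d w) with h | huw'
  · exact key2 hcl hstrict hd hu hud hw hwd huw h
  rcases eq_or_ne (phi d v) (phi d w) with h | hvw'
  · exact key2 hcl hstrict hd hv hvd hw hwd hvw h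
  rcases lt_or_gt_of_ne huv' with h1 | h1 <;>
    rcases lt_or_gt_of_ne huw' with h2 | h2 <;>
      rcases lt_or_gt_of_ne hvw' with h3 | h3
  · -- a<b, a<c, b<c : a<b<c, middle v
    exact key hconv hstrict hd (hfs hu) (hfs hw) (hfs hud) (hfs hwd)
      (hfs hv) (hfs hvd) hv hvd h1 h3
  · -- a<b, a<c, b>c : a<c<b, middle w
    exact key hconv hstrict hd (hfs hu) (hfs hv) (hfs hud) (hfs hvd)
      (hfs hw) (hfs hwd) hw hwd h2 h3
  · -- a<b, a>c, b<c : contradiction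
    exact absurd h3 (by push_neg; linarith)
  · -- a<b, a>c, b>c : c<a<b, middle u
    exact key hconv hstrict hd (hfs hw) (hfs hv) (hfs hwd) (hfs hvd)
      (hfs hu) (hfs hud) hu hud h2 h1
  · -- a>b, a<c, b<c : b<a<c, middle u
    exact key hconv hstrict hd (hfs hv) (hfs hw) (hfs hvd) (hfs hwd)
      (hfs hu) (hfs hud) hu hud h1 h2
  · -- a>b, a<c, b>c : contradiction
    exact absurd h3 (by push_neg; linarith)
  · -- a>b, a>c, b<c : b<c<a, middle w
    exact key hconv hstrict hd (hfs hv) (hfs hu) (hfs hvd) (hfs hud)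
      (hfs hw) (hfs hwd) hw hwd h3 h2
  · -- a>b, a>c, b>c : c<b<a, middle v
    exact key hconv hstrict hd (hfs hw) (hfs hu) (hfs hwd) (hfs hud)
      (hfs hv) (hfs hvd) hv hvd h3 h1

end Stmt10Aux

namespace Stmt10Aux

lemma cover {K : Set (ℝ × ℝ)} (hconv : Convex ℝ K) (hcl : IsClosed K)
    (hstrict : StrictConvex ℝ K) {y z : ℝ × ℝ} (hyz : y ≠ z) :
    ∃ a b : ℝ × ℝ,
      {w : ℝ × ℝ | ∃ x, y - x ∈ frontier K ∧ z - x ∈ frontier K ∧ w - x ∈ frontier K}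
        ⊆ {w | w - a ∈ frontier K} ∪ {w | w - b ∈ frontier K} := by
  classical
  set F := frontier K with hF
  set S : Set (ℝ × ℝ) := {x | y - x ∈ F ∧ z - x ∈ F} with hS
  have hd : z - y ≠ 0 := sub_ne_zero.2 (Ne.symm hyz)
  have habel : ∀ x : ℝ × ℝ, y - x + (z - y) = z - x := fun x => by abel
  have htwo : ∀ x₁ ∈ S, ∀ x₂ ∈ S, ∀ x₃ ∈ S, x₁ = x₂ ∨ x₁ = x₃ ∨ x₂ = x₃ := by
    intro x₁ h₁ x₂ h₂ x₃ h₃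
    have k1 : y - x₁ + (z - y) ∈ frontier K := by rw [habel x₁]; exact h₁.2
    have k2 : y - x₂ + (z - y) ∈ frontier K := by rw [habel x₂]; exact h₂.2
    have k3 : y - x₃ + (z - y) ∈ frontier K := by rw [habel x₃]; exact h₃.2
    have hkey := atMostTwo hconv hcl hstrict hd (u := y - x₁) (v := y - x₂) (w := y - x₃)
      h₁.1 k1 h₂.1 k2 h₃.1 k3
    rcases hkey with h | h | h
    · exact Or.inl (sub_right_injective h)
    · exact Or.inr (Or.inl (sub_right_injective h))
    · exact Or.inr (Or.inr (sub_right_injective h))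
  rcases S.eq_empty_or_nonempty with hSe | ⟨a, ha⟩
  · refine ⟨0, 0, ?_⟩
    rintro w ⟨x, hx1, hx2, _⟩
    exact absurd (show x ∈ S from ⟨hx1, hx2⟩) (by rw [hSe]; exact notMem_empty x)
  · by_cases hb : ∃ b ∈ S, b ≠ a
    · obtain ⟨b, hbS, hba⟩ := hb
      refine ⟨a, b, ?_⟩
      rintro w ⟨x, hx1, hx2, hx3⟩
      have hxS : x ∈ S := ⟨hx1, hx2⟩
      rcases htwo x hxS a ha b hbS with h | h | h
      · exact Or.inl (h ▸ hx3)
      · exact Or.inr (h ▸ hx3)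
      · exact absurd h.symm hba
    · push_neg at hb
      refine ⟨a, a, ?_⟩
      rintro w ⟨x, hx1, hx2, hx3⟩
      exact Or.inl ((hb x ⟨hx1, hx2⟩) ▸ hx3)

end Stmt10Aux

namespace Stmt10Aux

open Filter Topology

lemma closure_interior_eq {K : Set (ℝ × ℝ)} (hconv : Convex ℝ K) (hcl : IsClosed K)
    (hKint : (interior K).Nonempty) : closure (interior K) = K := by
  refine Subset.antisymm ?_ ?_
  · exact (closure_mono interior_subset).trans hcl.closure_eq.subset
  · intro x hx
    obtain ⟨y, hy⟩ := hKint
    have hmem : ∀ n : ℕ, x + (1 / (n + 1 : ℝ)) • (y - x) ∈ interior K := by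
      intro n
      refine hconv.add_smul_sub_mem_interior hx hy ⟨by positivity, ?_⟩
      rw [div_le_one (by positivity)]
      linarith [Nat.cast_nonneg (α := ℝ) n]
    have htend : Tendsto (fun n : ℕ => x + (1 / (n + 1 : ℝ)) • (y - x)) atTop (𝓝 x) := by
      have h0 : Tendsto (fun n : ℕ => 1 / (n + 1 : ℝ)) atTop (𝓝 0) :=
        tendsto_one_div_add_atTop_nhds_zero_nat
      have h1 : Tendsto (fun n : ℕ => x + (1 / (n + 1 : ℝ)) • (y - x)) atTop
          (𝓝 (x + (0:ℝ) • (y - x))) :=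
        (tendsto_const_nhds (x := x)).add (h0.smul_const (y - x))
      simpa using h1
    exact mem_closure_of_tendsto htend (Filter.Eventually.of_forall hmem)

lemma frontier_interior_eq {K : Set (ℝ × ℝ)} (hconv : Convex ℝ K) (hcl : IsClosed K)
    (hKint : (interior K).Nonempty) : frontier (interior K) = frontier K := by
  rw [frontier, frontier, closure_interior_eq hconv hcl hKint, interior_interior,
    hcl.closure_eq]

lemma translateSet_eq (x : ℝ × ℝ) (C : Set (ℝ × ℝ)) :
    (fun y => x + y) '' C = (fun p => p - x) ⁻¹' C := by
  ext p
  constructor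
  · rintro ⟨q, hq, rfl⟩; simpa using hq
  · intro hp
    refine ⟨p - x, hp, ?_⟩
    module

lemma frontier_translate {K : Set (ℝ × ℝ)} (hconv : Convex ℝ K) (hcl : IsClosed K)
    (hKint : (interior K).Nonempty) (x : ℝ × ℝ) :
    frontier ((fun y => x + y) '' (interior K)) = {p | p - x ∈ frontier K} := by
  rw [translateSet_eq]
  have h := (Homeomorph.subRight x).preimage_frontier (interior K)
  have h2 : (fun p : ℝ × ℝ => p - x) = ⇑(Homeomorph.subRight x) := rfl
  rw [h2, ← h, frontier_interior_eq hconv hcl hKint]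
  rfl

end Stmt10Aux

namespace Stmt10Aux

open Filter Topology

lemma isClosed_T {K : Set (ℝ × ℝ)} (hcomp : IsCompact K) :
    IsClosed {t : (ℝ × ℝ) × (ℝ × ℝ) × (ℝ × ℝ) |
      ∃ x, t.1 - x ∈ frontier K ∧ t.2.1 - x ∈ frontier K ∧ t.2.2 - x ∈ frontier K} := by
  have hFcl : IsClosed (frontier K) := isClosed_frontier
  have hFcomp : IsCompact (frontier K) :=
    hcomp.of_isClosed_subset hFcl hcomp.isClosed.frontier_subset
  apply IsSeqClosed.isClosed
  intro tn t hmem htend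
  choose xfun h1 h2 h3 using hmem
  set fn : ℕ → ℝ × ℝ := fun n => (tn n).1 - xfun n with hfn
  obtain ⟨f, hfF, φ, hφ, hfconv⟩ := hFcomp.tendsto_subseq h1
  have htt : Tendsto (fun k => tn (φ k)) atTop (𝓝 t) := htend.comp hφ.tendsto_atTop
  have hfst : Tendsto (fun k => (tn (φ k)).1) atTop (𝓝 t.1) :=
    (continuous_fst.tendsto t).comp htt
  have hsnd1 : Tendsto (fun k => (tn (φ k)).2.1) atTop (𝓝 t.2.1) :=
    ((continuous_fst.comp continuous_snd).tendsto t).comp htt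
  have hsnd2 : Tendsto (fun k => (tn (φ k)).2.2) atTop (𝓝 t.2.2) :=
    ((continuous_snd.comp continuous_snd).tendsto t).comp htt
  refine ⟨t.1 - f, ?_, ?_, ?_⟩
  · have : t.1 - (t.1 - f) = f := by abel
    rw [this]; exact hfF
  · have hmm : ∀ m, (tn m).2.1 - (tn m).1 + fn m ∈ frontier K := by
      intro m
      have hx : (tn m).2.1 - (tn m).1 + fn m = (tn m).2.1 - xfun m := by
        simp only [hfn]; abel
      rw [hx]; exact h2 m
    have hlim : Tendsto (fun k => (tn (φ k)).2.1 - (tn (φ k)).1 + fn (φ k)) atTop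
        (𝓝 (t.2.1 - t.1 + f)) := (hsnd1.sub hfst).add hfconv
    have hres : t.2.1 - t.1 + f ∈ frontier K :=
      hFcl.mem_of_tendsto hlim (Eventually.of_forall fun k => hmm (φ k))
    have : t.2.1 - (t.1 - f) = t.2.1 - t.1 + f := by abel
    rw [this]; exact hres
  · have hmm : ∀ m, (tn m).2.2 - (tn m).1 + fn m ∈ frontier K := by
      intro m
      have hx : (tn m).2.2 - (tn m).1 + fn m = (tn m).2.2 - xfun m := by
        simp only [hfn]; abel
      rw [hx]; exact h3 m
    have hlim : Tendsto (fun k => (tn (φ k)).2.2 - (tn (φ k)).1 + fn (φ k)) atTop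
        (𝓝 (t.2.2 - t.1 + f)) := (hsnd2.sub hfst).add hfconv
    have hres : t.2.2 - t.1 + f ∈ frontier K :=
      hFcl.mem_of_tendsto hlim (Eventually.of_forall fun k => hmm (φ k))
    have : t.2.2 - (t.1 - f) = t.2.2 - t.1 + f := by abel
    rw [this]; exact hres

end Stmt10Aux

namespace Stmt10Aux

open MeasureTheory

lemma map_triple {n : ℕ} (P : Measure (ℝ × ℝ)) [IsProbabilityMeasure P]
    {i j l : Fin n} (hij : i ≠ j) (hil : i ≠ l) (hjl : j ≠ l) :
    Measure.map (fun ω : Fin n → ℝ × ℝ => (ω i, ω j, ω l)) (Measure.pi fun _ => P)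
      = P.prod (P.prod P) := by
  classical
  have hg : Measurable (fun ω : Fin n → ℝ × ℝ => (ω i, ω j, ω l)) :=
    (measurable_pi_apply i).prodMk ((measurable_pi_apply j).prodMk (measurable_pi_apply l))
  haveI hfin : IsProbabilityMeasure
      (Measure.map (fun ω : Fin n → ℝ × ℝ => (ω i, ω j, ω l)) (Measure.pi fun _ => P)) :=
    Measure.isProbabilityMeasure_map hg.aemeasurable
  refine ext_of_generate_finite
    (Set.image2 (· ×ˢ ·) {s : Set (ℝ × ℝ) | MeasurableSet s}
      (Set.image2 (· ×ˢ ·) {s : Set (ℝ × ℝ) | MeasurableSet s}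
        {s : Set (ℝ × ℝ) | MeasurableSet s}))
    ?_ ?_ ?_ ?_
  · exact (generateFrom_eq_prod MeasurableSpace.generateFrom_measurableSet generateFrom_prod
      isCountablySpanning_measurableSet
      (isCountablySpanning_measurableSet.prod isCountablySpanning_measurableSet)).symm
  · exact MeasurableSpace.isPiSystem_measurableSet.prod isPiSystem_prod
  · rintro _ ⟨s, hs, _, ⟨t, ht, u, hu, rfl⟩, rfl⟩
    rw [Set.mem_setOf_eq] at hs ht hu
    rw [Measure.map_apply hg (hs.prod (ht.prod hu)), Measure.prod_prod, Measure.prod_prod]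
    have hpre : (fun ω : Fin n → ℝ × ℝ => (ω i, ω j, ω l)) ⁻¹' (s ×ˢ t ×ˢ u)
        = Set.pi Set.univ
          (fun k => if k = i then s else if k = j then t else if k = l then u else Set.univ) := by
      ext ω
      simp only [Set.mem_preimage, Set.mem_prod, Set.mem_pi, Set.mem_univ, true_implies]
      constructor
      · rintro ⟨h1, h2, h3⟩ k
        split_ifs with hki hkj hkl
        · subst hki; exact h1
        · subst hkj; exact h2
        · subst hkl; exact h3
        · trivial
      · intro h
        refine ⟨?_, ?_, ?_⟩
        · have := h i; rwa [if_pos rfl] at this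
        · have := h j; rwa [if_neg (fun hh => hij hh.symm), if_pos rfl] at this
        · have := h l
          rwa [if_neg (fun hh => hil hh.symm), if_neg (fun hh => hjl hh.symm),
            if_pos rfl] at this
    rw [hpre, Measure.pi_pi]
    have hoff : ∀ k ∈ Finset.univ, k ∉ ({i, j, l} : Finset (Fin n)) →
        P (if k = i then s else if k = j then t else if k = l then u else Set.univ) = 1 := by
      intro k _ hk
      simp only [Finset.mem_insert, Finset.mem_singleton] at hk
      push_neg at hk
      rw [if_neg hk.1, if_neg hk.2.1, if_neg hk.2.2]
      exact measure_univ
    rw [← Finset.prod_subset (Finset.subset_univ ({i, j, l} : Finset (Fin n))) hoff]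
    have hni : i ∉ ({j, l} : Finset (Fin n)) := by simp [hij, hil]
    have hnj : j ∉ ({l} : Finset (Fin n)) := by simp [hjl]
    rw [Finset.prod_insert hni, Finset.prod_insert hnj, Finset.prod_singleton]
    rw [if_pos rfl, if_neg (fun hh => hij hh.symm), if_pos rfl,
      if_neg (fun hh => hil hh.symm), if_neg (fun hh => hjl hh.symm), if_pos rfl]
  · rw [measure_univ, measure_univ]

end Stmt10Aux

end Stmt10AuxSection

/-- Let `C` be the interior of a strictly convex body `K ⊆ ℝ²` and let `P` be a Borel
probability measure on `ℝ²` giving measure `0` to the boundary of every translate of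
`C`. Then, almost surely, no three of `n` independent `P`-distributed random points lie
on the boundary of a common translate of `C` (with the joint law of the sample being
the product measure). -/
theorem stmt10 (K : Set (ℝ × ℝ))
    (hKcomp : IsCompact K) (hKconv : Convex ℝ K) (hKint : (interior K).Nonempty)
    (hKstrict : StrictConvex ℝ K)
    (C : Set (ℝ × ℝ)) (hC : C = interior K)
    (P : Measure (ℝ × ℝ)) [IsProbabilityMeasure P]
    (hbd : ∀ x : ℝ × ℝ, P (frontier (translateSet x C)) = 0)
    (n : ℕ) :
    (Measure.pi fun _ : Fin n => P)
      {ω : Fin n → ℝ × ℝ | ∃ (x : ℝ × ℝ) (i j l : Fin n), i ≠ j ∧ i ≠ l ∧ j ≠ l ∧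
        ω i ∈ frontier (translateSet x C) ∧ ω j ∈ frontier (translateSet x C) ∧
        ω l ∈ frontier (translateSet x C)} = 0 := by
  classical
  have hcl : IsClosed K := hKcomp.isClosed
  -- frontier of a translate
  have hft : ∀ x, frontier (translateSet x C) = {p : ℝ × ℝ | p - x ∈ frontier K} := by
    intro x
    show frontier ((fun y => x + y) '' C) = _
    rw [hC]
    exact Stmt10Aux.frontier_translate hKconv hcl hKint x
  have hP0 : ∀ a, P {p : ℝ × ℝ | p - a ∈ frontier K} = 0 := fun a => by
    rw [← hft a]; exact hbd a
  -- no atoms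
  have hFne : (frontier K).Nonempty := by
    rcases eq_or_ne (frontier K) ∅ with h | h
    · exfalso
      have hclopen : IsClopen K := isClopen_iff_frontier_eq_empty.2 h
      rcases isClopen_iff.1 hclopen with h' | h'
      · rw [h'] at hKint; simp at hKint
      · exact hKcomp.ne_univ h'
    · exact Set.nonempty_iff_ne_empty.2 h
  obtain ⟨q0, hq0⟩ := hFne
  have hatom : ∀ p : ℝ × ℝ, P {p} = 0 := by
    intro p
    refine measure_mono_null ?_ (hP0 (p - q0))
    intro w hw
    rw [Set.mem_singleton_iff] at hw
    subst hw
    show w - (w - q0) ∈ frontier K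
    have he : w - (w - q0) = q0 := by abel
    rw [he]; exact hq0
  -- the triple set
  set T : Set ((ℝ × ℝ) × (ℝ × ℝ) × (ℝ × ℝ)) :=
    {t | ∃ x, t.1 - x ∈ frontier K ∧ t.2.1 - x ∈ frontier K ∧ t.2.2 - x ∈ frontier K}
    with hTdef
  have hTmeas : MeasurableSet T := (Stmt10Aux.isClosed_T hKcomp).measurableSet
  -- the diagonal
  set D : Set ((ℝ × ℝ) × (ℝ × ℝ) × (ℝ × ℝ)) := {t | t.1 = t.2.1} with hDdef
  have hDmeas : MeasurableSet D :=
    (isClosed_eq continuous_fst (continuous_fst.comp continuous_snd)).measurableSet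
  have hDnull : (P.prod (P.prod P)) D = 0 := by
    rw [Measure.prod_apply hDmeas]
    have hsl : ∀ y : ℝ × ℝ, (P.prod P) (Prod.mk y ⁻¹' D) = 0 := by
      intro y
      have he : Prod.mk y ⁻¹' D = ({y} : Set (ℝ × ℝ)) ×ˢ (Set.univ : Set (ℝ × ℝ)) := by
        ext q
        constructor
        · intro hq
          exact ⟨(show y = q.1 from hq).symm, trivial⟩
        · rintro ⟨h1, -⟩
          exact (show q.1 = y from h1).symm
      rw [he, Measure.prod_prod, hatom y]
      simp
    rw [lintegral_congr hsl, lintegral_zero]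
  have hTDnull : (P.prod (P.prod P)) (T \ D) = 0 := by
    rw [Measure.prod_apply (hTmeas.diff hDmeas)]
    have hsl : ∀ y : ℝ × ℝ, (P.prod P) (Prod.mk y ⁻¹' (T \ D)) = 0 := by
      intro y
      rw [Measure.prod_apply ((hTmeas.diff hDmeas).preimage measurable_prodMk_left)]
      have hww : ∀ z : ℝ × ℝ, P (Prod.mk z ⁻¹' (Prod.mk y ⁻¹' (T \ D))) = 0 := by
        intro z
        rcases eq_or_ne y z with heq | hyz
        · have hne : Prod.mk z ⁻¹' (Prod.mk y ⁻¹' (T \ D)) = ∅ := by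
            ext w
            simp only [Set.mem_preimage, Set.mem_empty_iff_false, iff_false, Set.mem_diff,
              not_and, not_not]
            intro _
            exact heq
          rw [hne]; exact measure_empty
        · obtain ⟨a, b, hab⟩ := Stmt10Aux.cover hKconv hcl hKstrict hyz
          refine measure_mono_null ?_
            (measure_union_null (hP0 a) (hP0 b))
          intro w hw
          obtain ⟨x, h1, h2, h3⟩ := hw.1
          exact hab ⟨x, h1, h2, h3⟩
      rw [lintegral_congr hww, lintegral_zero]
    rw [lintegral_congr hsl, lintegral_zero]
  have hP3 : (P.prod (P.prod P)) T = 0 := by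
    have h1 : (P.prod (P.prod P)) T ≤ (P.prod (P.prod P)) ((T \ D) ∪ D) :=
      measure_mono (Set.subset_diff_union T D)
    rw [measure_union_null hTDnull hDnull] at h1
    exact le_antisymm h1 (zero_le)
  -- assemble
  have hsub : {ω : Fin n → ℝ × ℝ | ∃ (x : ℝ × ℝ) (i j l : Fin n), i ≠ j ∧ i ≠ l ∧ j ≠ l ∧
        ω i ∈ frontier (translateSet x C) ∧ ω j ∈ frontier (translateSet x C) ∧
        ω l ∈ frontier (translateSet x C)}
      ⊆ ⋃ i : Fin n, ⋃ j : Fin n, ⋃ l : Fin n,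
          {ω : Fin n → ℝ × ℝ | i ≠ j ∧ i ≠ l ∧ j ≠ l ∧ (ω i, ω j, ω l) ∈ T} := by
    rintro ω ⟨x, i, j, l, hij, hil, hjl, h1, h2, h3⟩
    rw [hft x, Set.mem_setOf_eq] at h1 h2 h3
    exact Set.mem_iUnion.2 ⟨i, Set.mem_iUnion.2 ⟨j, Set.mem_iUnion.2
      ⟨l, hij, hil, hjl, ⟨x, h1, h2, h3⟩⟩⟩⟩
  refine measure_mono_null hsub ?_
  refine measure_iUnion_null fun i => measure_iUnion_null fun j =>
    measure_iUnion_null fun l => ?_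
  by_cases hij : i = j
  · have : {ω : Fin n → ℝ × ℝ | i ≠ j ∧ i ≠ l ∧ j ≠ l ∧ (ω i, ω j, ω l) ∈ T} = ∅ := by
      ext ω; simp [hij]
    rw [this]; exact measure_empty
  by_cases hil : i = l
  · have : {ω : Fin n → ℝ × ℝ | i ≠ j ∧ i ≠ l ∧ j ≠ l ∧ (ω i, ω j, ω l) ∈ T} = ∅ := by
      ext ω; simp [hil]
    rw [this]; exact measure_empty
  by_cases hjl : j = l
  · have : {ω : Fin n → ℝ × ℝ | i ≠ j ∧ i ≠ l ∧ j ≠ l ∧ (ω i, ω j, ω l) ∈ T} = ∅ := by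
      ext ω; simp [hjl]
    rw [this]; exact measure_empty
  · have hg : Measurable (fun ω : Fin n → ℝ × ℝ => (ω i, ω j, ω l)) :=
      (measurable_pi_apply i).prodMk
        ((measurable_pi_apply j).prodMk (measurable_pi_apply l))
    have hsub2 : {ω : Fin n → ℝ × ℝ | i ≠ j ∧ i ≠ l ∧ j ≠ l ∧ (ω i, ω j, ω l) ∈ T}
        ⊆ (fun ω : Fin n → ℝ × ℝ => (ω i, ω j, ω l)) ⁻¹' T := fun ω h => h.2.2.2
    refine measure_mono_null hsub2 ?_
    have hmap := Measure.map_apply (μ := Measure.pi fun _ : Fin n => P) hg hTmeas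
    rw [Stmt10Aux.map_triple P hij hil hjl] at hmap
    rw [← hmap]
    exact hP3
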